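/- Let D and C be abelian categories, D~ ⊆ D an additive full subcategory containing all projective objects of D, where D has enough projectives, and let F, F~ : D → C be right exact functors. Then any natural isomorphism β : F~|_{D~} → F|_{D~} extends to a unique natural isomorphism α : F~ → F with α|_{D~} = β. -/

import Mathlib

open CategoryTheory CategoryTheory.Limits

universe v₁ v₂ u₁ u₂

/-- A pair of composable morphisms `f : X ⟶ Y`, `g : Y ⟶ Z` forms a right exact sequence
`X ⟶ Y ⟶ Z ⟶ 0`. -/
def RightExactSeq {C : Type u₁} [Category.{v₁} C] [Abelian C] {X Y Z : C}
    (f : X ⟶ Y) (g : Y ⟶ Z) : Prop :=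
  ∃ w : f ≫ g = 0, Epi g ∧ (ShortComplex.mk f g w).Exact

/-- A functor between abelian categories is right exact if it preserves right exact
sequences. -/
def IsRightExactFunctor {C : Type u₁} [Category.{v₁} C] [Abelian C]
    {D : Type u₂} [Category.{v₂} D] [Abelian D] (F : C ⥤ D) : Prop :=
  ∀ ⦃X Y Z : C⦄ (f : X ⟶ Y) (g : Y ⟶ Z),
    RightExactSeq f g → RightExactSeq (F.map f) (F.map g)

section Aux

variable {D : Type u₁} [Category.{v₁} D] [Abelian D]
  {C : Type u₂} [Category.{v₂} C] [Abelian C] [EnoughProjectives D]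

/-- The morphism `Q_X ⟶ P_X` in the canonical right exact sequence `Q_X ⟶ P_X ⟶ X ⟶ 0`. -/
noncomputable def stmtd (X : D) :
    Projective.over (kernel (Projective.π X)) ⟶ Projective.over X :=
  Projective.π _ ≫ kernel.ι (Projective.π X)

lemma stmtdp (X : D) : stmtd X ≫ Projective.π X = 0 := by
  simp [stmtd]

lemma stmtRE (X : D) : RightExactSeq (stmtd X) (Projective.π X) := by
  refine ⟨stmtdp X, Projective.π_epi X, ?_⟩
  let φ : ShortComplex.mk (stmtd X) (Projective.π X) (stmtdp X) ⟶
      ShortComplex.mk (kernel.ι (Projective.π X)) (Projective.π X) (kernel.condition _) :=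
    { τ₁ := Projective.π _
      τ₂ := 𝟙 _
      τ₃ := 𝟙 _
      comm₁₂ := by simp [stmtd]
      comm₂₃ := by simp }
  have : Epi φ.τ₁ := by dsimp [φ]; infer_instance
  have : IsIso φ.τ₂ := by dsimp [φ]; infer_instance
  have : Mono φ.τ₃ := by dsimp [φ]; infer_instance
  rw [ShortComplex.exact_iff_of_epi_of_isIso_of_mono φ]
  exact ShortComplex.exact_of_f_is_kernel _ (kernelIsKernel _)

variable {G H : D ⥤ C}

lemma stmtEpi (hG : IsRightExactFunctor G) (X : D) : Epi (G.map (Projective.π X)) :=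
  (hG _ _ (stmtRE X)).choose_spec.1

lemma stmtEx (hG : IsRightExactFunctor G) (X : D) :
    (ShortComplex.mk (G.map (stmtd X)) (G.map (Projective.π X))
      (hG _ _ (stmtRE X)).choose).Exact :=
  (hG _ _ (stmtRE X)).choose_spec.2

variable (S : D → Prop) (hproj : ∀ X : D, Projective X → S X)

/-- The object `P_X` of the full subcategory. -/
noncomputable abbrev stmtP (X : D) : ObjectProperty.FullSubcategory S :=
  ⟨Projective.over X, hproj _ inferInstance⟩

/-- The object `Q_X` of the full subcategory. -/
noncomputable abbrev stmtQ (X : D) : ObjectProperty.FullSubcategory S :=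
  ⟨Projective.over (kernel (Projective.π X)), hproj _ inferInstance⟩

variable (hG : IsRightExactFunctor G) (hH : IsRightExactFunctor H)
  (γ : ObjectProperty.ι S ⋙ G ⟶ ObjectProperty.ι S ⋙ H)

/-- The component at `X` of the extension of `γ`. -/
noncomputable def stmtApp (X : D) : G.obj X ⟶ H.obj X :=
  have : Epi (G.map (Projective.π X)) := stmtEpi hG X
  have hHz : H.map (stmtd X) ≫ H.map (Projective.π X) = 0 := (hH _ _ (stmtRE X)).choose
  (stmtEx hG X).desc (γ.app (stmtP S hproj X) ≫ H.map (Projective.π X)) (by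
    have hnat : G.map (stmtd X) ≫ γ.app (stmtP S hproj X) =
        γ.app (stmtQ S hproj X) ≫ H.map (stmtd X) :=
      γ.naturality (show stmtQ S hproj X ⟶ stmtP S hproj X from ObjectProperty.homMk (stmtd X))
    have hzero : H.map (stmtd X) ≫ H.map (Projective.π X) = 0 :=
      (hH _ _ (stmtRE X)).choose
    show G.map (stmtd X) ≫ γ.app (stmtP S hproj X) ≫ H.map (Projective.π X) = 0
    rw [← Category.assoc, hnat, Category.assoc, hzero, comp_zero])

lemma stmtApp_fac (X : D) :
    G.map (Projective.π X) ≫ stmtApp S hproj hG hH γ X =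
      γ.app (stmtP S hproj X) ≫ H.map (Projective.π X) := by
  have : Epi (G.map (Projective.π X)) := stmtEpi hG X
  exact ShortComplex.Exact.g_desc (stmtEx hG X) _ _

lemma stmtApp_nat {X Y : D} (f : X ⟶ Y) :
    G.map f ≫ stmtApp S hproj hG hH γ Y = stmtApp S hproj hG hH γ X ≫ H.map f := by
  have : Epi (G.map (Projective.π X)) := stmtEpi hG X
  rw [← cancel_epi (G.map (Projective.π X))]
  obtain ⟨f₁, hfac⟩ : ∃ f₁ : Projective.over X ⟶ Projective.over Y,
      f₁ ≫ Projective.π Y = Projective.π X ≫ f :=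
    ⟨Projective.factorThru _ _, Projective.factorThru_comp _ _⟩
  have hnat : G.map f₁ ≫ γ.app (stmtP S hproj Y) =
      γ.app (stmtP S hproj X) ≫ H.map f₁ :=
    γ.naturality (show stmtP S hproj X ⟶ stmtP S hproj Y from ObjectProperty.homMk f₁)
  calc G.map (Projective.π X) ≫ G.map f ≫ stmtApp S hproj hG hH γ Y
      = G.map f₁ ≫ G.map (Projective.π Y) ≫ stmtApp S hproj hG hH γ Y := by
        rw [← Category.assoc, ← Category.assoc, ← G.map_comp, ← G.map_comp, hfac]
    _ = G.map f₁ ≫ γ.app (stmtP S hproj Y) ≫ H.map (Projective.π Y) := by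
        rw [stmtApp_fac]
    _ = γ.app (stmtP S hproj X) ≫ H.map f₁ ≫ H.map (Projective.π Y) := by
        rw [← Category.assoc, hnat, Category.assoc]
    _ = γ.app (stmtP S hproj X) ≫ H.map (Projective.π X) ≫ H.map f := by
        rw [← H.map_comp, hfac, H.map_comp]
    _ = G.map (Projective.π X) ≫ stmtApp S hproj hG hH γ X ≫ H.map f := by
        rw [← Category.assoc, ← stmtApp_fac S hproj hG hH γ X, Category.assoc]

/-- The extension of `γ` to a natural transformation `G ⟶ H`. -/
noncomputable def stmtNT : G ⟶ H where
  app := stmtApp S hproj hG hH γ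
  naturality _ _ f := stmtApp_nat S hproj hG hH γ f

lemma stmtNT_app_mem (X : ObjectProperty.FullSubcategory S) :
    stmtApp S hproj hG hH γ X.obj = γ.app X := by
  have : Epi (G.map (Projective.π X.obj)) := stmtEpi hG X.obj
  rw [← cancel_epi (G.map (Projective.π X.obj)), stmtApp_fac]
  have hnat : G.map (Projective.π X.obj) ≫ γ.app X =
      γ.app (stmtP S hproj X.obj) ≫ H.map (Projective.π X.obj) :=
    γ.naturality (show stmtP S hproj X.obj ⟶ X from ObjectProperty.homMk (Projective.π X.obj))
  exact hnat.symm

lemma stmtNT_unique (σ : G ⟶ H) (hσ : ∀ X : ObjectProperty.FullSubcategory S, σ.app X.obj = γ.app X) :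
    σ = stmtNT S hproj hG hH γ := by
  ext X
  have : Epi (G.map (Projective.π X)) := stmtEpi hG X
  rw [← cancel_epi (G.map (Projective.π X))]
  have h1 : G.map (Projective.π X) ≫ σ.app X =
      σ.app (Projective.over X) ≫ H.map (Projective.π X) := σ.naturality _
  have h2 : σ.app (Projective.over X) = γ.app (stmtP S hproj X) := hσ (stmtP S hproj X)
  dsimp [stmtNT]
  rw [stmtApp_fac, h1, h2]

end Aux

/-- Let `D` and `C` be abelian categories with `D` having enough projectives, let
`S` determine an additive full subcategory `D~ ⊆ D` (containing zero objects, closed under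
binary direct sums) containing all projective objects of `D`, and let `F, F~ : D ⥤ C` be
right exact functors.  Then any natural isomorphism `β : F~|_{D~} ⟶ F|_{D~}` extends to a
unique natural isomorphism `α : F~ ⟶ F` with `α|_{D~} = β`. -/
theorem stmt9 {D : Type u₁} [Category.{v₁} D] [Abelian D]
    {C : Type u₂} [Category.{v₂} C] [Abelian C]
    [EnoughProjectives D]
    (S : D → Prop)
    (hzero : ∀ X : D, Limits.IsZero X → S X)
    (hsum : ∀ X Y : D, S X → S Y → S (X ⊞ Y))
    (hproj : ∀ X : D, Projective X → S X)
    (F' F : D ⥤ C)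
    (hF' : IsRightExactFunctor F') (hF : IsRightExactFunctor F)
    (β : ObjectProperty.ι S ⋙ F' ≅ ObjectProperty.ι S ⋙ F) :
    ∃! α : F' ≅ F, ∀ X : ObjectProperty.FullSubcategory S, α.hom.app X.obj = β.hom.app X := by
  refine ⟨⟨stmtNT S hproj hF' hF β.hom, stmtNT S hproj hF hF' β.inv, ?_, ?_⟩,
    fun X => stmtNT_app_mem S hproj hF' hF β.hom X, ?_⟩
  · ext X
    have : Epi (F'.map (Projective.π X)) := stmtEpi hF' X
    have : Epi (F.map (Projective.π X)) := stmtEpi hF X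
    rw [← cancel_epi (F'.map (Projective.π X))]
    dsimp [stmtNT]
    rw [← Category.assoc, stmtApp_fac S hproj hF' hF β.hom X, Category.assoc,
      stmtApp_fac S hproj hF hF' β.inv X, ← Category.assoc, Iso.hom_inv_id_app]
    exact (Category.id_comp _).trans (Category.comp_id _).symm
  · ext X
    have : Epi (F'.map (Projective.π X)) := stmtEpi hF' X
    have : Epi (F.map (Projective.π X)) := stmtEpi hF X
    rw [← cancel_epi (F.map (Projective.π X))]
    dsimp [stmtNT]
    rw [← Category.assoc, stmtApp_fac S hproj hF hF' β.inv X, Category.assoc,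
      stmtApp_fac S hproj hF' hF β.hom X, ← Category.assoc, Iso.inv_hom_id_app]
    exact (Category.id_comp _).trans (Category.comp_id _).symm
  · intro α' hα'
    exact Iso.ext (stmtNT_unique S hproj hF' hF β.hom α'.hom hα')
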